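/- Let A be an alphabet with exactly 2 letters. Then for every word u over A, h(u) = ρ(u) + 1. -/

import Mathlib

/-- Simon's congruence of order `k`: `u` and `v` have the same subwords
(subsequences) of length at most `k`. -/
def SimonCong {A : Type*} (k : ℕ) (u v : List A) : Prop :=
  ∀ s : List A, s.length ≤ k → (s.Sublist u ↔ s.Sublist v)

/-- The subword distance `δ(u,v) = sup {k | u ∼ₖ v} ∈ ℕ ∪ {∞}`. -/
noncomputable def delta {A : Type*} (u v : List A) : ℕ∞ :=
  ⨆ k ∈ {k : ℕ | SimonCong k u v}, (k : ℕ∞)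

/-- Right side distance `r(u,t) = δ(u, u·t)`. -/
noncomputable def sideR {A : Type*} (u t : List A) : ℕ∞ :=
  delta u (u ++ t)

/-- Left side distance `ℓ(t,u) = δ(t·u, u)`. -/
noncomputable def sideL {A : Type*} (t u : List A) : ℕ∞ :=
  delta (t ++ u) u

/-- The piecewise complexity `h(u)`: the least `n` such that every word
`v` with `u ∼ₙ v` equals `u`. -/
noncomputable def pieceH {A : Type*} (u : List A) : ℕ :=
  sInf {n : ℕ | ∀ v : List A, SimonCong n u v → v = u}

/-- A word `u` is `m`-reduced if no strict subword of `u` is `∼ₘ`-equivalent to `u`. -/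
def MReduced {A : Type*} (m : ℕ) (u : List A) : Prop :=
  ∀ u' : List A, u'.Sublist u → u' ≠ u → ¬ SimonCong m u' u

/-- The piecewise minimality index `ρ(u)`: the least `m` such that `u` is `m`-reduced. -/
noncomputable def rho {A : Type*} (u : List A) : ℕ :=
  sInf {m : ℕ | MReduced m u}

namespace Stmt17Aux

open List

variable {A : Type*}

/-! ### Basic sublist helpers -/

lemma sublist_snoc_iff {x s : List A} {d : A} :
    s <+ x ++ [d] ↔ s <+ x ∨ ∃ s', s = s' ++ [d] ∧ s' <+ x := by
  constructor
  · intro h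
    obtain ⟨s₁, s₂, rfl, h₁, h₂⟩ := sublist_append_iff.mp h
    rcases List.sublist_singleton.mp h₂ with rfl | rfl
    · exact Or.inl (by simpa using h₁)
    · exact Or.inr ⟨s₁, rfl, h₁⟩
  · rintro (h | ⟨s', rfl, h⟩)
    · exact h.trans (List.sublist_append_left x [d])
    · exact h.append (Sublist.refl [d])

lemma snoc_eq_last {α c' s' : List A} {d : A} (h : α ++ c' = s' ++ [d]) (hne : c' ≠ []) :
    ∃ t₀, c' = t₀ ++ [d] := by
  rcases List.eq_nil_or_concat c' with rfl | ⟨t₀, d₀, rfl⟩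
  · exact absurd rfl hne
  · rw [List.concat_eq_append] at h ⊢
    rw [← List.append_assoc] at h
    obtain ⟨-, h2⟩ := List.append_inj' h (by simp)
    simp only [List.cons.injEq] at h2
    exact ⟨t₀, by rw [h2.1]⟩

lemma snoc_sublist_snoc_ne {Z W : List A} {c d : A}
    (h : Z ++ [c] <+ W ++ [d]) (hne : c ≠ d) : Z ++ [c] <+ W := by
  obtain ⟨α, β, hαβ, hα, hβ⟩ := sublist_append_iff.mp h
  rcases List.sublist_singleton.mp hβ with rfl | rfl
  · rw [List.append_nil] at hαβ; rw [hαβ]; exact hα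
  · obtain ⟨-, h2⟩ := List.append_inj' hαβ (by simp)
    simp only [List.cons.injEq] at h2
    exact absurd h2.1 hne

lemma sublist_of_cons_ne {w : List A} {c c' : A} {r : List A}
    (h : c' :: r <+ c :: w) (hne : c' ≠ c) : c' :: r <+ w := by
  rcases List.sublist_cons_iff.mp h with h' | ⟨r', hr, h'⟩
  · exact h'
  · simp only [List.cons.injEq] at hr
    exact absurd hr.1 hne

/-! ### SimonCong basics -/

lemma simonCong_mono {m n : ℕ} {u v : List A} (hmn : m ≤ n) (h : SimonCong n u v) :
    SimonCong m u v := fun s hs => h s (le_trans hs hmn)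

lemma simonCong_symm {n : ℕ} {u v : List A} (h : SimonCong n u v) : SimonCong n v u :=
  fun s hs => (h s hs).symm

lemma simonCong_trans {n : ℕ} {u v w : List A} (h : SimonCong n u v) (h' : SimonCong n v w) :
    SimonCong n u w := fun s hs => (h s hs).trans (h' s hs)

/-! ### The right- and left- absorption predicates -/

/-- `Rp k x d` : every subword of `x` of length `< k` can be extended by `d` inside `x`. -/
def Rp (k : ℕ) (x : List A) (d : A) : Prop :=
  ∀ s : List A, s <+ x → s.length < k → s ++ [d] <+ x

/-- `Lp l d y` : every subword of `y` of length `< l` can be extended by `d` on the left. -/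
def Lp (l : ℕ) (d : A) (y : List A) : Prop :=
  ∀ t : List A, t <+ y → t.length < l → d :: t <+ y

lemma Rp_zero {x : List A} {d : A} : Rp 0 x d := fun _ _ h => absurd h (by omega)

lemma Lp_zero {y : List A} {d : A} : Lp 0 d y := fun _ _ h => absurd h (by omega)

lemma Rp_nil {k : ℕ} {d : A} (h : Rp k [] d) : k = 0 := by
  by_contra hk
  have h1 := h [] (List.nil_sublist _) (by simp; omega)
  simp at h1

lemma Lp_nil {l : ℕ} {d : A} (h : Lp l d []) : l = 0 := by
  by_contra hl
  have h1 := h [] (List.nil_sublist _) (by simp; omega)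
  simp at h1

lemma Rp_snoc_same_up {k : ℕ} {x : List A} {d : A} (h : Rp k x d) :
    Rp (k + 1) (x ++ [d]) d := by
  intro s hs hlen
  rcases sublist_snoc_iff.mp hs with h1 | ⟨s', rfl, h1⟩
  · exact h1.append (Sublist.refl [d])
  · have hl : s'.length < k := by simp at hlen; omega
    exact (h s' h1 hl).append (Sublist.refl [d])

lemma Rp_snoc_same_down {k : ℕ} {x : List A} {d : A} (h : Rp (k + 1) (x ++ [d]) d) :
    Rp k x d := by
  intro s hs hlen
  have h1 : (s ++ [d]) ++ [d] <+ x ++ [d] :=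
    h (s ++ [d]) (hs.append (Sublist.refl [d])) (by simp; omega)
  exact (List.append_sublist_append_right [d]).mp h1

lemma Rp_snoc_other {k : ℕ} {x : List A} {d e : A} (h : Rp (k + 1) (x ++ [e]) d) :
    Rp k x e := by
  intro s hs hlen
  have h1 : (s ++ [e]) ++ [d] <+ x ++ [e] :=
    h (s ++ [e]) (hs.append (Sublist.refl [e])) (by simp; omega)
  by_cases hde : d = e
  · subst hde
    exact (List.append_sublist_append_right [d]).mp h1
  · exact (List.sublist_append_left _ _).trans (snoc_sublist_snoc_ne h1 hde)

lemma Lp_iff_Rp {l : ℕ} {d : A} {y : List A} : Lp l d y ↔ Rp l y.reverse d := by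
  constructor
  · intro h s hs hlen
    have h1 : s.reverse <+ y := by simpa using hs.reverse
    have h2 := h s.reverse h1 (by simpa using hlen)
    have h3 := h2.reverse
    simpa using h3
  · intro h t ht hlen
    have h1 : t.reverse <+ y.reverse := ht.reverse
    have h2 := h t.reverse h1 (by simpa using hlen)
    have h3 := h2.reverse
    simpa using h3

lemma Lp_cons_same_down {l : ℕ} {d : A} {y : List A} (h : Lp (l + 1) d (d :: y)) :
    Lp l d y := by
  rw [Lp_iff_Rp] at h ⊢
  rw [List.reverse_cons] at h
  exact Rp_snoc_same_down h

lemma Lp_cons_other {l : ℕ} {d c : A} {y : List A} (h : Lp (l + 1) d (c :: y)) :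
    Lp l c y := by
  rw [Lp_iff_Rp] at h ⊢
  rw [List.reverse_cons] at h
  exact Rp_snoc_other h

/-! ### Combining and splitting one-letter insertions -/

lemma combine {x y : List A} {d : A} {k l : ℕ} (hR : Rp k x d) (hL : Lp l d y) :
    SimonCong (k + l) (x ++ y) (x ++ d :: y) := by
  intro s hs
  constructor
  · intro h; exact h.trans ((Sublist.refl x).append (List.sublist_cons_self d y))
  · intro h
    obtain ⟨s₁, s₂, rfl, h₁, h₂⟩ := sublist_append_iff.mp h
    rcases List.sublist_cons_iff.mp h₂ with h₂' | ⟨s₃, rfl, h₃⟩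
    · exact h₁.append h₂'
    · by_cases hk : s₁.length < k
      · have h4 : (s₁ ++ [d]) ++ s₃ <+ x ++ y := (hR s₁ h₁ hk).append h₃
        simpa using h4
      · have hlt : s₃.length < l := by simp at hs; omega
        exact h₁.append (hL s₃ h₃ hlt)

lemma split {x y : List A} {d : A} {n : ℕ} (h : SimonCong n (x ++ y) (x ++ d :: y)) :
    ∃ k l, k + l = n ∧ Rp k x d ∧ Lp l d y := by
  classical
  letI : DecidablePred (fun j => Rp j x d) := fun _ => Classical.propDecidable _
  obtain ⟨k, hkdef⟩ : ∃ k, k = Nat.findGreatest (fun j => Rp j x d) n := ⟨_, rfl⟩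
  have hkn : k ≤ n := by rw [hkdef]; exact Nat.findGreatest_le n
  have hRk : Rp k x d := by
    rw [hkdef]
    exact Nat.findGreatest_spec (P := fun j => Rp j x d) (Nat.zero_le n) Rp_zero
  refine ⟨k, n - k, by omega, hRk, ?_⟩
  intro t ht hlt
  have hkn' : k < n := by omega
  have hnot : ¬ Rp (k + 1) x d := by
    have := Nat.findGreatest_is_greatest (P := fun j => Rp j x d)
      (show Nat.findGreatest (fun j => Rp j x d) n < k + 1 by omega) (by omega)
    exact this
  simp only [Rp, not_forall] at hnot
  obtain ⟨s', hs'x, hs'len, hs'd⟩ := hnot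
  by_contra hdt
  have hprobe : (s' ++ [d]) ++ t <+ x ++ d :: y := by
    have h0 : (s' ++ [d]) ++ t <+ (x ++ [d]) ++ y :=
      (hs'x.append (Sublist.refl [d])).append ht
    simpa using h0
  have hlen : ((s' ++ [d]) ++ t).length ≤ n := by simp; omega
  have h2 : (s' ++ [d]) ++ t <+ x ++ y := (h _ hlen).mpr hprobe
  obtain ⟨α, β, hαβ, hα, hβ⟩ := sublist_append_iff.mp h2
  rcases List.append_eq_append_iff.mp hαβ with ⟨t', hα', hβ'⟩ | ⟨t', hs', hβ'⟩
  · -- α = (s'++[d]) ++ t'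
    rw [hα'] at hα
    exact hs'd ((List.sublist_append_left _ _).trans hα)
  · -- s'++[d] = α ++ t' and β = t' ++ t
    rcases eq_or_ne t' [] with rfl | htne
    · rw [List.append_nil] at hs'
      rw [← hs'] at hα
      exact hs'd hα
    · obtain ⟨t₀, rfl⟩ := snoc_eq_last hs'.symm htne
      have hdty : d :: t <+ β := by
        have h5 : [] ++ (d :: t) <+ t₀ ++ (d :: t) :=
          (List.nil_sublist t₀).append (Sublist.refl (d :: t))
        rw [hβ']
        simpa using h5
      exact hdt (hdty.trans hβ)

/-! ### The binary core lemma: an absorbed insertion yields an absorbed deletion -/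

lemma core (hbin : ∀ x y z : A, x ≠ z → y ≠ z → x = y) {x y : List A} {d : A} {k l n : ℕ}
    (hkl : k + l = n) (hn : 1 ≤ n) (hR : Rp k x d) (hL : Lp l d y) :
    ∃ x' e y', x ++ y = x' ++ e :: y' ∧ SimonCong (n - 1) (x' ++ y') (x ++ y) := by
  rcases Nat.eq_zero_or_pos l with hl0 | hlpos
  · -- l = 0, so k = n ≥ 1
    subst hl0
    obtain ⟨k'', rfl⟩ : ∃ k'', k = k'' + 1 := ⟨k - 1, by omega⟩
    rcases List.eq_nil_or_concat x with rfl | ⟨x'', c, rfl⟩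
    · exact absurd (Rp_nil hR) (by omega)
    · rw [List.concat_eq_append] at hR ⊢
      by_cases hcd : c = d
      · subst hcd
        have hR' : Rp k'' x'' c := Rp_snoc_same_down hR
        have hc := combine hR' hL
        refine ⟨x'', c, y, by simp, ?_⟩
        have he : k'' + 0 = n - 1 := by omega
        have hsh : x'' ++ c :: y = (x'' ++ [c]) ++ y := by simp
        rw [he, hsh] at hc
        exact hc
      · have hR' : Rp k'' x'' c := Rp_snoc_other hR
        have hc := combine hR' (Lp_zero (y := y) (d := c))
        refine ⟨x'', c, y, by simp, ?_⟩
        have he : k'' + 0 = n - 1 := by omega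
        have hsh : x'' ++ c :: y = (x'' ++ [c]) ++ y := by simp
        rw [he, hsh] at hc
        exact hc
  · -- l ≥ 1
    obtain ⟨l'', rfl⟩ : ∃ l'', l = l'' + 1 := ⟨l - 1, by omega⟩
    rcases y with _ | ⟨c, y'⟩
    · exact absurd (Lp_nil hL) (by omega)
    · by_cases hcd : c = d
      · subst hcd
        have hL' : Lp l'' c y' := Lp_cons_same_down hL
        have hc := combine hR hL'
        refine ⟨x, c, y', rfl, ?_⟩
        have he : k + l'' = n - 1 := by omega
        rw [he] at hc
        exact hc
      · have hL' : Lp l'' c y' := Lp_cons_other hL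
        rcases List.eq_nil_or_concat x with rfl | ⟨x'', c', rfl⟩
        · have hk0 : k = 0 := Rp_nil hR
          have hc := combine (Rp_zero (x := ([] : List A)) (d := c)) hL'
          refine ⟨[], c, y', rfl, ?_⟩
          have he : (0 : ℕ) + l'' = n - 1 := by omega
          rw [he] at hc
          exact hc
        · rw [List.concat_eq_append] at hR ⊢
          by_cases hc'd : c' = d
          · subst hc'd
            rcases Nat.eq_zero_or_pos k with hk0 | hkpos
            · subst hk0
              have hc := combine (Rp_zero (x := x'' ++ [c']) (d := c)) hL'
              refine ⟨x'' ++ [c'], c, y', rfl, ?_⟩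
              have he : (0 : ℕ) + l'' = n - 1 := by omega
              rw [he] at hc
              exact hc
            · obtain ⟨k'', rfl⟩ : ∃ k'', k = k'' + 1 := ⟨k - 1, by omega⟩
              have hR' : Rp k'' x'' c' := Rp_snoc_same_down hR
              have hc := combine hR' hL
              refine ⟨x'', c', c :: y', by simp, ?_⟩
              have he : k'' + (l'' + 1) = n - 1 := by omega
              have hsh : x'' ++ c' :: (c :: y') = (x'' ++ [c']) ++ (c :: y') := by simp
              rw [he, hsh] at hc
              exact hc
          · have hc'c : c' = c := hbin c' c d hc'd hcd
            subst hc'c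
            rcases Nat.eq_zero_or_pos k with hk0 | hkpos
            · subst hk0
              have hc := combine (Rp_zero (x := x'' ++ [c']) (d := c')) hL'
              refine ⟨x'' ++ [c'], c', y', rfl, ?_⟩
              have he : (0 : ℕ) + l'' = n - 1 := by omega
              rw [he] at hc
              exact hc
            · obtain ⟨k'', rfl⟩ : ∃ k'', k = k'' + 1 := ⟨k - 1, by omega⟩
              have hR' : Rp k'' x'' c' := Rp_snoc_other hR
              have hR3 : Rp (k'' + 1) (x'' ++ [c']) c' := Rp_snoc_same_up hR'
              have hc := combine hR3 hL'
              refine ⟨x'' ++ [c'], c', y', rfl, ?_⟩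
              have he : (k'' + 1) + l'' = n - 1 := by omega
              rw [he] at hc
              exact hc

/-! ### The key absorption lemma (MAXC') -/

lemma maxc_key {q u v : List A} {b : A} {n : ℕ}
    (hq : q = [] ∨ ∃ q₀, q = q₀ ++ [b])
    (hu : ∀ a, u.head? = some a → a ≠ b)
    (H : SimonCong n (q ++ u) (q ++ b :: v))
    {s₁ s₃ : List A} (h₁ : s₁ <+ q) (h₃ : s₃ <+ u)
    (hlen : s₁.length + 1 + s₃.length ≤ n) :
    s₁ ++ b :: s₃ <+ q ++ u := by
  by_cases hb : s₁ ++ [b] <+ q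
  · have h0 : (s₁ ++ [b]) ++ s₃ <+ q ++ u := hb.append h₃
    simpa using h0
  -- Step 1 : s₃ <+ v
  have hs3v : s₃ <+ v := by
    rcases s₃ with _ | ⟨c, s₄⟩
    · exact List.nil_sublist v
    -- build s₂' = c₀ :: rest with c₀ ≠ b, c::s₄ <+ s₂' <+ u
    obtain ⟨c₀, rest, hc₀b, hs₂u, hsub3, hlen2⟩ :
        ∃ c₀ rest, c₀ ≠ b ∧ (c₀ :: rest) <+ u ∧ (c :: s₄) <+ (c₀ :: rest) ∧
          (c₀ :: rest).length ≤ (c :: s₄).length + 1 := by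
      by_cases hcb : c = b
      · rcases u with _ | ⟨a, u₁⟩
        · simp at h₃
        · have ha : a ≠ b := hu a rfl
          have h₃' : (c :: s₄) <+ u₁ :=
            sublist_of_cons_ne h₃ (by rw [hcb]; exact Ne.symm ha)
          exact ⟨a, c :: s₄, ha, List.cons_sublist_cons.mpr h₃',
            List.sublist_cons_self a _, by simp⟩
      · exact ⟨c, s₄, hcb, h₃, Sublist.refl _, by simp⟩
    have hQu : s₁ ++ (c₀ :: rest) <+ q ++ u := h₁.append hs₂u
    have hQlen : (s₁ ++ (c₀ :: rest)).length ≤ n := by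
      simp only [List.length_append] at *
      simp only [List.length_cons] at *
      omega
    have hQv : s₁ ++ (c₀ :: rest) <+ q ++ b :: v := (H _ hQlen).mp hQu
    obtain ⟨α, β, hαβ, hα, hβ⟩ := sublist_append_iff.mp hQv
    have hs₂'v : (c₀ :: rest) <+ v := by
      rcases List.append_eq_append_iff.mp hαβ with ⟨a', hα', hβ'⟩ | ⟨t', hs', hβ'⟩
      · -- α = s₁ ++ a', c₀::rest = a' ++ β
        rcases a' with _ | ⟨a₀, a''⟩
        · -- β = c₀ :: rest
          simp only [List.nil_append] at hβ'
          rw [← hβ'] at hβ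
          exact sublist_of_cons_ne hβ hc₀b
        · -- a' = a₀ :: a'' and c₀ :: rest = a₀ :: (a'' ++ β)
          simp only [List.cons_append, List.cons.injEq] at hβ'
          obtain ⟨rfl, -⟩ := hβ'
          have hsc : s₁ ++ [c₀] <+ α := by
            rw [hα']
            have : s₁ ++ (c₀ :: a'') = (s₁ ++ [c₀]) ++ a'' := by simp
            rw [this]
            exact List.sublist_append_left _ _
          have hscq : s₁ ++ [c₀] <+ q := hsc.trans hα
          rcases hq with rfl | ⟨q₀, rfl⟩
          · simp at hscq
          · have h5 : s₁ ++ [c₀] <+ q₀ := snoc_sublist_snoc_ne hscq hc₀b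
            have h6 : s₁ <+ q₀ := (List.sublist_append_left _ _).trans h5
            exact absurd (h6.append (Sublist.refl [b])) hb
      · -- s₁ = α ++ t', β = t' ++ (c₀ :: rest)
        rcases eq_or_ne t' [] with rfl | htne
        · simp only [List.nil_append] at hβ'
          rw [hβ'] at hβ
          exact sublist_of_cons_ne hβ hc₀b
        · -- s₁ ends with b
          have hs₁snoc : ∃ s₁'', s₁ = s₁'' ++ [b] := by
            rcases hq with rfl | ⟨q₀, rfl⟩
            · have : s₁ = [] := List.sublist_nil.mp h₁
              rw [this] at hs'
              rcases List.append_eq_nil_iff.mp hs'.symm with ⟨-, h7⟩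
              exact absurd h7 htne
            · rcases sublist_snoc_iff.mp h₁ with h7 | ⟨s₁'', rfl, -⟩
              · exact absurd (h7.append (Sublist.refl [b])) hb
              · exact ⟨s₁'', rfl⟩
          obtain ⟨s₁'', hs₁''⟩ := hs₁snoc
          obtain ⟨t₀, rfl⟩ := snoc_eq_last (by rw [← hs', hs₁'']) htne
          have h8 : b :: (c₀ :: rest) <+ β := by
            have h9 : [] ++ (b :: (c₀ :: rest)) <+ t₀ ++ (b :: (c₀ :: rest)) :=
              (List.nil_sublist t₀).append (Sublist.refl _)
            have h10 : β = t₀ ++ (b :: (c₀ :: rest)) := by rw [hβ']; simp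
            rw [h10]; simpa using h9
          have h11 : b :: (c₀ :: rest) <+ b :: v := h8.trans hβ
          exact List.cons_sublist_cons.mp h11
    exact hsub3.trans hs₂'v
  -- Step 2 : conclude through the v-side
  have hfin : s₁ ++ b :: s₃ <+ q ++ b :: v :=
    h₁.append (List.cons_sublist_cons.mpr hs3v)
  have hflen : (s₁ ++ b :: s₃).length ≤ n := by simp; omega
  exact (H _ hflen).mpr hfin

lemma maxc {q u v : List A} {b : A} {n : ℕ}
    (hq : q = [] ∨ ∃ q₀, q = q₀ ++ [b])
    (hu : ∀ a, u.head? = some a → a ≠ b)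
    (H : SimonCong n (q ++ u) (q ++ b :: v)) :
    SimonCong n (q ++ u) (q ++ b :: u) := by
  intro s hs
  constructor
  · intro h; exact h.trans ((Sublist.refl q).append (List.sublist_cons_self b u))
  · intro h
    obtain ⟨s₁, s₂, rfl, h₁, h₂⟩ := sublist_append_iff.mp h
    rcases List.sublist_cons_iff.mp h₂ with h₂' | ⟨s₃, rfl, h₃⟩
    · exact h₁.append h₂'
    · exact maxc_key hq hu H h₁ h₃ (by simp at hs ⊢; omega)

/-! ### One-letter deletions and insertions between comparable words -/

lemma del_between : ∀ {u' u : List A}, u' <+ u → u' ≠ u →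
    ∃ x e y, u = x ++ e :: y ∧ u' <+ x ++ y := by
  intro u' u h
  induction h with
  | slnil => exact fun h => absurd rfl h
  | @cons l₁ l₂ a h ih =>
      exact fun _ => ⟨[], a, l₂, rfl, h⟩
  | @cons_cons l₁ l₂ a h ih =>
      intro hne
      by_cases he : l₁ = l₂
      · exact absurd (by rw [he]) hne
      · obtain ⟨x, e, y, h1, h2⟩ := ih he
        exact ⟨a :: x, e, y, by rw [h1]; rfl, List.cons_sublist_cons.mpr h2⟩

lemma ins_between : ∀ {u w : List A}, u <+ w → u ≠ w →
    ∃ x e y, u = x ++ y ∧ x ++ e :: y <+ w := by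
  intro u w h
  induction h with
  | slnil => exact fun h => absurd rfl h
  | @cons l₁ l₂ a h ih =>
      exact fun _ => ⟨[], a, l₁, rfl, List.cons_sublist_cons.mpr h⟩
  | @cons_cons l₁ l₂ a h ih =>
      intro hne
      by_cases he : l₁ = l₂
      · exact absurd (by rw [he]) hne
      · obtain ⟨x, e, y, h1, h2⟩ := ih he
        exact ⟨a :: x, e, y, by rw [h1]; rfl, List.cons_sublist_cons.mpr h2⟩

/-! ### Longest common prefix -/

variable [DecidableEq A]

def cp : List A → List A → List A
  | a :: as, c :: cs => if a = c then a :: cp as cs else []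
  | _, _ => []

lemma cp_spec : ∀ u w : List A, ∃ x y, u = cp u w ++ x ∧ w = cp u w ++ y ∧
    ∀ a c, x.head? = some a → y.head? = some c → a ≠ c
  | [], w => ⟨[], w, by simp [cp], by simp [cp], by simp⟩
  | a :: as, [] => ⟨a :: as, [], by simp [cp], by simp [cp], by simp⟩
  | a :: as, c :: cs => by
    by_cases h : a = c
    · subst h
      obtain ⟨x, y, h1, h2, h3⟩ := cp_spec as cs
      have hcp : cp (a :: as) (a :: cs) = a :: cp as cs := by simp [cp]
      refine ⟨x, y, ?_, ?_, h3⟩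
      · rw [hcp, List.cons_append, ← h1]
      · rw [hcp, List.cons_append, ← h2]
    · refine ⟨a :: as, c :: cs, by simp [cp, h], by simp [cp, h], ?_⟩
      intro a' c' ha hc
      simp only [List.head?_cons, Option.some.injEq] at ha hc
      rw [← ha, ← hc]; exact h

lemma cp_append_same : ∀ (p X Y : List A), cp (p ++ X) (p ++ Y) = p ++ cp X Y
  | [], X, Y => by simp
  | a :: p, X, Y => by
    show (if a = a then a :: cp (p ++ X) (p ++ Y) else []) = (a :: p) ++ cp X Y
    rw [if_pos rfl, cp_append_same p X Y]
    rfl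

lemma cp_length_le_left : ∀ (u w : List A), (cp u w).length ≤ u.length
  | [], w => by simp [cp]
  | a :: as, [] => by simp [cp]
  | a :: as, c :: cs => by
    by_cases h : a = c
    · simp only [cp, if_pos h, List.length_cons]
      exact Nat.succ_le_succ (cp_length_le_left as cs)
    · simp [cp, h]

/-- The measure for the main induction. -/
def mu (u w : List A) : ℕ := u.length + w.length - 2 * (cp u w).length

/-! ### Main reduction: a nontrivial congruence yields an absorbed deletion -/

lemma exists_del (hbin : ∀ x y z : A, x ≠ z → y ≠ z → x = y) {n : ℕ} (hn : 1 ≤ n) :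
    ∀ m : ℕ, ∀ u w : List A, mu u w ≤ m → SimonCong n u w → w ≠ u →
      ∃ x e y, u = x ++ e :: y ∧ SimonCong (n - 1) (x ++ y) u := by
  intro m
  induction m with
  | zero =>
      intro u w hmu H hne
      obtain ⟨xt, yt, hux, hwy, -⟩ := cp_spec u w
      have hlu := congrArg List.length hux
      have hlw := congrArg List.length hwy
      simp only [List.length_append] at hlu hlw
      unfold mu at hmu
      have hxt : xt = [] := by
        have h0 : xt.length = 0 := by omega
        exact List.eq_nil_of_length_eq_zero h0
      have hyt : yt = [] := by
        have h0 : yt.length = 0 := by omega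
        exact List.eq_nil_of_length_eq_zero h0
      subst hxt hyt
      simp only [List.append_nil] at hux hwy
      exact absurd (by rw [hwy, ← hux]) hne
  | succ m ih =>
      intro u w hmu H hne
      by_cases hwu : w <+ u
      · obtain ⟨x, e, y, hueq, hsub⟩ := del_between hwu hne
        refine ⟨x, e, y, hueq, ?_⟩
        intro s hs
        constructor
        · intro h
          refine h.trans ?_
          rw [hueq]
          exact (Sublist.refl x).append (List.sublist_cons_self e y)
        · intro h
          have h1 : s <+ w := (H s (le_trans hs (by omega))).mp h
          exact h1.trans hsub
      · by_cases huw : u <+ w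
        · obtain ⟨x, e, y, hueq, hsub⟩ := ins_between huw (fun h => hne h.symm)
          have hS1 : SimonCong n (x ++ y) (x ++ e :: y) := by
            intro s hs
            constructor
            · intro h
              exact h.trans ((Sublist.refl x).append (List.sublist_cons_self e y))
            · intro h
              have h1 : s <+ w := h.trans hsub
              have h2 : s <+ u := (H s hs).mpr h1
              rw [hueq] at h2; exact h2
          obtain ⟨k, l, hkl, hR, hL⟩ := split hS1
          obtain ⟨x', e', y', heq, hS⟩ := core hbin hkl hn hR hL
          exact ⟨x', e', y', by rw [hueq, heq], by rw [hueq]; exact hS⟩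
        · -- incomparable-prefix case
          obtain ⟨xt, yt, hux, hwy, hhead⟩ := cp_spec u w
          set p := cp u w with hp
          rcases xt with _ | ⟨a, x₂⟩
          · rw [List.append_nil] at hux
            rw [hux] at huw
            exact absurd ((List.sublist_append_left p yt).trans (by rw [← hwy])) huw
          rcases yt with _ | ⟨b, y₂⟩
          · rw [List.append_nil] at hwy
            rw [hwy] at hwu
            exact absurd ((List.sublist_append_left p (a :: x₂)).trans (by rw [← hux])) hwu
          have hab : a ≠ b := hhead a b rfl rfl
          have H' : SimonCong n (p ++ (a :: x₂)) (p ++ b :: y₂) := by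
            rw [← hux, ← hwy]; exact H
          by_cases hqb : p = [] ∨ ∃ p₀, p = p₀ ++ [b]
          · -- insert b into u, then use split + core
            have Hins : SimonCong n (p ++ (a :: x₂)) (p ++ b :: (a :: x₂)) :=
              maxc hqb (by intro a' ha'; simp only [List.head?_cons,
                Option.some.injEq] at ha'; rw [← ha']; exact hab) H'
            obtain ⟨k, l, hkl, hR, hL⟩ := split Hins
            obtain ⟨x', e', y', heq, hS⟩ := core hbin hkl hn hR hL
            exact ⟨x', e', y', by rw [hux, heq], by rw [hux]; exact hS⟩
          · push_neg at hqb
            obtain ⟨hpne, hpnotb⟩ := hqb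
            obtain ⟨p₀, c, hpc⟩ : ∃ p₀ c, p = p₀ ++ [c] := by
              rcases List.eq_nil_or_concat p with h | ⟨p₀, c, h⟩
              · exact absurd h hpne
              · exact ⟨p₀, c, by rw [h, List.concat_eq_append]⟩
            have hcb : c ≠ b := by
              intro h; exact hpnotb p₀ (by rw [hpc, h])
            have hca : c = a := hbin c a b hcb hab
            have hq' : p = [] ∨ ∃ p₀', p = p₀' ++ [a] := Or.inr ⟨p₀, by rw [hpc, hca]⟩
            have H₂ : SimonCong n (p ++ (b :: y₂)) (p ++ a :: x₂) := by
              have := simonCong_symm H'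
              exact this
            have Hw' : SimonCong n (p ++ (b :: y₂)) (p ++ a :: (b :: y₂)) :=
              maxc hq' (by intro a' ha'; simp only [List.head?_cons,
                Option.some.injEq] at ha'; rw [← ha']; exact Ne.symm hab) H₂
            set w' := p ++ a :: (b :: y₂) with hw'
            have Hn' : SimonCong n u w' := by
              have h1 : SimonCong n u (p ++ (b :: y₂)) := by rw [← hwy]; exact H
              exact simonCong_trans h1 Hw'
            have hw'ne : w' ≠ u := by
              intro heq
              apply hwu
              rw [hwy, ← heq, hw']
              exact (Sublist.refl p).append (List.sublist_cons_self a _)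
            -- measure decreases
            have hmu' : mu u w' ≤ m := by
              have hcp' : cp u w' = p ++ a :: cp x₂ (b :: y₂) := by
                rw [hux, hw']
                rw [cp_append_same p (a :: x₂) (a :: (b :: y₂))]
                congr 1
                show cp (a :: x₂) (a :: (b :: y₂)) = a :: cp x₂ (b :: y₂)
                simp [cp]
              have hγ : (cp x₂ (b :: y₂)).length ≤ x₂.length := cp_length_le_left _ _
              have hlu := congrArg List.length hux
              have hlw' := congrArg List.length hw'
              have hlw := congrArg List.length hwy
              have hlcp' := congrArg List.length hcp'
              simp only [List.length_append, List.length_cons] at hlu hlw' hlw hlcp'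
              have hmuw : mu u w ≤ m + 1 := hmu
              unfold mu at hmuw ⊢
              rw [← hp] at hmuw
              omega
            exact ih u w' hmu' Hn' hw'ne

end Stmt17Aux

theorem stmt17 {A : Type*} [Fintype A] (hA : Fintype.card A = 2) (u : List A) :
    pieceH u = rho u + 1 := by
  classical
  open Stmt17Aux List in
  letI : DecidableEq A := Classical.decEq A
  have hbin : ∀ x y z : A, x ≠ z → y ≠ z → x = y := by
    have h2 : (Finset.univ : Finset A).card = 2 := hA
    obtain ⟨a, b, hab, hu⟩ := Finset.card_eq_two.mp h2
    intro x y z hx hy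
    have m : ∀ w : A, w = a ∨ w = b := by
      intro w
      have hw : w ∈ (Finset.univ : Finset A) := Finset.mem_univ w
      rw [hu] at hw; simpa using hw
    rcases m x with h1 | h1 <;> rcases m y with h2' | h2' <;> rcases m z with h3 | h3 <;>
      subst h1 h2' <;> simp_all
  have hnemp : Nonempty A := Fintype.card_pos_iff.mp (by omega)
  set ρ := rho u with hρdef
  have hlen_mem : MReduced u.length u := by
    intro u' hsub hne' hSC
    have h1 : u <+ u' := (hSC u le_rfl).mpr (List.Sublist.refl u)
    exact hne' (hsub.eq_of_length_le h1.length_le)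
  have hSne : {m | MReduced m u}.Nonempty := ⟨u.length, hlen_mem⟩
  have hMρ : MReduced ρ u := Nat.sInf_mem hSne
  -- every word (ρ+1)-congruent to u equals u
  have hpart1 : ∀ v : List A, SimonCong (ρ + 1) u v → v = u := by
    intro v hv
    by_contra hvne
    obtain ⟨x, e, y, hueq, hS⟩ :=
      exists_del hbin (by omega : 1 ≤ ρ + 1) (mu u v) u v le_rfl hv hvne
    have hsub : x ++ y <+ u := by
      rw [hueq]; exact (List.Sublist.refl x).append (List.sublist_cons_self e y)
    have hneq : x ++ y ≠ u := by
      rw [hueq]; intro h; apply_fun List.length at h; simp at h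
    have hS' : SimonCong ρ (x ++ y) u := by simpa using hS
    exact hMρ (x ++ y) hsub hneq hS'
  -- there is a word ≠ u which is ρ-congruent to u
  have hpart2 : ∃ v : List A, v ≠ u ∧ SimonCong ρ u v := by
    rcases Nat.eq_zero_or_pos ρ with h0 | hpos
    · obtain ⟨a⟩ := hnemp
      refine ⟨a :: u, by intro h; apply_fun List.length at h; simp at h, ?_⟩
      rw [h0]
      intro s hs
      have hsnil : s = [] := List.eq_nil_of_length_eq_zero (Nat.le_zero.mp hs)
      subst hsnil
      simp
    · obtain ⟨m, hm⟩ : ∃ m, ρ = m + 1 := ⟨ρ - 1, by omega⟩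
      have hρs : sInf {m | MReduced m u} = ρ := rfl
      have hnotred : ¬ MReduced m u :=
        Nat.notMem_of_lt_sInf (show m < sInf {m | MReduced m u} by omega)
      unfold MReduced at hnotred
      push_neg at hnotred
      obtain ⟨u', hsub, hune, hSC⟩ := hnotred
      obtain ⟨x, e, y, huxy, hsub'⟩ := del_between hsub hune
      have hS1 : SimonCong m (x ++ y) (x ++ e :: y) := by
        intro s hs
        constructor
        · intro h
          exact h.trans ((List.Sublist.refl x).append (List.sublist_cons_self e y))
        · intro h
          have h1 : s <+ u := by rw [huxy]; exact h
          have h2 : s <+ u' := (hSC s hs).mpr h1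
          exact h2.trans hsub'
      obtain ⟨k, l, hkl, hR, hL⟩ := split hS1
      have hR' := Rp_snoc_same_up hR
      have hc := combine hR' hL
      refine ⟨x ++ e :: e :: y, ?_, ?_⟩
      · intro h
        apply_fun List.length at h
        rw [huxy] at h; simp at h
      · have h1 : (x ++ [e]) ++ y = u := by rw [huxy]; simp
        have h2 : (x ++ [e]) ++ (e :: y) = x ++ e :: e :: y := by simp
        rw [h1, h2] at hc
        have h3 : k + 1 + l = ρ := by omega
        rw [h3] at hc
        exact hc
  have hShne : ({n | ∀ v : List A, SimonCong n u v → v = u} : Set ℕ).Nonempty :=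
    ⟨ρ + 1, hpart1⟩
  show sInf {n | ∀ v : List A, SimonCong n u v → v = u} = ρ + 1
  apply Nat.le_antisymm
  · exact Nat.sInf_le hpart1
  · by_contra hlt
    push_neg at hlt
    have hmem := Nat.sInf_mem hShne
    obtain ⟨v, hvne, hvS⟩ := hpart2
    have hle : sInf {n | ∀ v : List A, SimonCong n u v → v = u} ≤ ρ := by omega
    exact hvne (hmem v (simonCong_mono hle hvS))
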